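/- Let n ≥ 2, β > 0, γ > 0 and α a real number with α − (n−1)β > 0. Then the function F(λ₁,…,λₙ) = ∏_{i=1}^n λ_i^{(α−(n−1)β)/2 − 1} e^{−γ λ_i} · ∏_{1≤i<j≤n} (λ_j − λ_i)^β is integrable over the closed chamber {λ ∈ ℝⁿ : 0 ≤ λ₁ ≤ … ≤ λₙ} with respect to Lebesgue measure. -/

import Mathlib

open MeasureTheory Finset

/-- The (unnormalized) density of the stationary probability measure of the
eigenvalue SDE (Proposition 2.6 of the paper) is integrable on the closed
chamber. -/
theorem stmt_7 (n : ℕ) (hn : 2 ≤ n) (α β γ : ℝ) (hβ : 0 < β) (hγ : 0 < γ)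
    (hαβ : 0 < α - ((n : ℝ) - 1) * β)
    (F : (Fin n → ℝ) → ℝ)
    (hF : ∀ l : Fin n → ℝ, F l =
      (∏ i : Fin n,
          (l i) ^ ((α - ((n : ℝ) - 1) * β) / 2 - 1) * Real.exp (-γ * l i)) *
        ∏ p ∈ Finset.univ.filter (fun p : Fin n × Fin n => p.1 < p.2),
          (l p.2 - l p.1) ^ β) :
    IntegrableOn F {l : Fin n → ℝ | 0 ≤ l ⟨0, by omega⟩ ∧ Monotone l} volume := by
  set a : ℝ := α - ((n : ℝ) - 1) * β with ha
  set S : Set (Fin n → ℝ) := {l : Fin n → ℝ | 0 ≤ l ⟨0, by omega⟩ ∧ Monotone l} with hS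
  -- the set is measurable
  have hSmeas : MeasurableSet S := by
    have : S = {l : Fin n → ℝ | 0 ≤ l ⟨0, by omega⟩} ∩
        ⋂ p : Fin n × Fin n, ⋂ _ : p.1 ≤ p.2, {l : Fin n → ℝ | l p.1 ≤ l p.2} := by
      ext l
      simp only [hS, Set.mem_setOf_eq, Set.mem_inter_iff, Set.mem_iInter]
      constructor
      · rintro ⟨h0, hm⟩
        exact ⟨h0, fun p hp => hm hp⟩
      · rintro ⟨h0, hm⟩
        exact ⟨h0, fun i j hij => hm (i, j) hij⟩
    rw [this]
    refine (measurableSet_le measurable_const (measurable_pi_apply _)).inter ?_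
    exact MeasurableSet.iInter fun p => MeasurableSet.iInter fun _ =>
      measurableSet_le (measurable_pi_apply _) (measurable_pi_apply _)
  -- coordinates are nonnegative on S
  have hnonneg : ∀ l ∈ S, ∀ i : Fin n, 0 ≤ l i := by
    rintro l ⟨h0, hm⟩ i
    exact le_trans h0 (hm (by exact Fin.mk_le_of_le_val (Nat.zero_le _)))
  -- the dominating one-dimensional functions
  set g : Fin n → ℝ → ℝ :=
    fun i x => x ^ (a / 2 - 1 + β * i.val) * Real.exp (-γ * x) with hg
  have hgint : ∀ i : Fin n, IntegrableOn (g i) (Set.Ioi 0) := by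
    intro i
    have hexp : -1 < a / 2 - 1 + β * i.val := by
      have : (0:ℝ) ≤ β * i.val := by positivity
      linarith
    have := integrableOn_rpow_mul_exp_neg_mul_rpow (s := a / 2 - 1 + β * i.val)
      (p := 1) (b := γ) hexp zero_lt_one hγ
    simpa [hg, Real.rpow_one] using this
  -- the dominating function is the product of indicator versions
  set h : Fin n → ℝ → ℝ := fun i => (Set.Ioi (0:ℝ)).indicator (g i) with hh
  have hhint : ∀ i, Integrable (h i) := fun i =>
    (integrable_indicator_iff measurableSet_Ioi).mpr (hgint i)
  set G : (Fin n → ℝ) → ℝ := fun l => ∏ i, h i (l i) with hG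
  have hGint : Integrable G := Integrable.fintype_prod hhint
  -- measurability of F
  have hFmeas : Measurable F := by
    have : F = fun l : Fin n → ℝ =>
        (∏ i : Fin n, (l i) ^ (a / 2 - 1) * Real.exp (-γ * l i)) *
          ∏ p ∈ Finset.univ.filter (fun p : Fin n × Fin n => p.1 < p.2),
            (l p.2 - l p.1) ^ β := by
      funext l; rw [hF l]
    rw [this]
    refine Measurable.mul ?_ ?_
    · exact Finset.measurable_prod _ fun i _ =>
        ((measurable_pi_apply i).pow_const _).mul
          (by fun_prop : Measurable fun l : Fin n → ℝ => -γ * l i).exp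
    · exact Finset.measurable_prod _ fun p _ =>
        ((measurable_pi_apply p.2).sub (measurable_pi_apply p.1)).pow_const _
  -- almost everywhere, no coordinate is zero
  have hae : ∀ᵐ l : Fin n → ℝ ∂(volume.restrict S), ∀ i : Fin n, l i ≠ 0 := by
    have : ∀ᵐ l : Fin n → ℝ ∂(volume : Measure (Fin n → ℝ)), ∀ i : Fin n, l i ≠ 0 := by
      rw [MeasureTheory.ae_all_iff]
      intro i
      simpa [MeasureTheory.volume_pi] using
        MeasureTheory.Measure.ae_eval_ne (fun _ : Fin n => (volume : Measure ℝ)) i 0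
    exact ae_restrict_of_ae this
  -- the pointwise bound
  have hbound : ∀ᵐ l : Fin n → ℝ ∂(volume.restrict S), ‖F l‖ ≤ ‖G l‖ := by
    filter_upwards [hae, ae_restrict_mem hSmeas] with l hne hlS
    have hpos : ∀ i : Fin n, 0 < l i := fun i =>
      lt_of_le_of_ne (hnonneg l hlS i) (Ne.symm (hne i))
    -- F l is nonnegative
    have hFnn : 0 ≤ F l := by
      rw [hF l]
      refine mul_nonneg (Finset.prod_nonneg fun i _ => ?_)
        (Finset.prod_nonneg fun p hp => ?_)
      · exact mul_nonneg (Real.rpow_nonneg (hpos i).le _) (Real.exp_pos _).le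
      · have : l p.1 ≤ l p.2 := hlS.2 (le_of_lt (Finset.mem_filter.mp hp).2)
        exact Real.rpow_nonneg (by linarith) _
    -- G l equals the product of g i (l i)
    have hGl : G l = ∏ i, g i (l i) := by
      refine Finset.prod_congr rfl fun i _ => ?_
      exact Set.indicator_of_mem (Set.mem_Ioi.mpr (hpos i)) _
    -- key estimate
    have key : F l ≤ G l := by
      rw [hF l, hGl]
      have step1 : (∏ p ∈ Finset.univ.filter (fun p : Fin n × Fin n => p.1 < p.2),
            (l p.2 - l p.1) ^ β) ≤
          ∏ p ∈ Finset.univ.filter (fun p : Fin n × Fin n => p.1 < p.2), (l p.2) ^ β := by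
        refine Finset.prod_le_prod (fun p hp => ?_) (fun p hp => ?_)
        · have : l p.1 ≤ l p.2 := hlS.2 (le_of_lt (Finset.mem_filter.mp hp).2)
          exact Real.rpow_nonneg (by linarith) _
        · refine Real.rpow_le_rpow ?_ ?_ hβ.le
          · have : l p.1 ≤ l p.2 := hlS.2 (le_of_lt (Finset.mem_filter.mp hp).2)
            linarith
          · have := hpos p.1
            linarith
      have step2 : (∏ p ∈ Finset.univ.filter (fun p : Fin n × Fin n => p.1 < p.2),
            (l p.2) ^ β) = ∏ j : Fin n, (l j) ^ (β * j.val) := by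
        rw [Finset.prod_finset_product_right
          (Finset.univ.filter (fun p : Fin n × Fin n => p.1 < p.2)) Finset.univ
          (fun j => Finset.Iio j) (by simp)]
        refine Finset.prod_congr rfl fun j _ => ?_
        calc (∏ a ∈ Finset.Iio j, l (a, j).2 ^ β) = ∏ _a ∈ Finset.Iio j, (l j) ^ β :=
              Finset.prod_congr rfl fun _ _ => rfl
          _ = ((l j) ^ β) ^ (Finset.Iio j).card := Finset.prod_const _
          _ = (l j) ^ (β * j.val) := by
              rw [Fin.card_Iio, ← Real.rpow_natCast ((l j) ^ β) j.val,
                ← Real.rpow_mul (hpos j).le]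
      calc (∏ i : Fin n, (l i) ^ (a / 2 - 1) * Real.exp (-γ * l i)) *
            ∏ p ∈ Finset.univ.filter (fun p : Fin n × Fin n => p.1 < p.2),
              (l p.2 - l p.1) ^ β
          ≤ (∏ i : Fin n, (l i) ^ (a / 2 - 1) * Real.exp (-γ * l i)) *
            ∏ j : Fin n, (l j) ^ (β * j.val) := by
            rw [← step2]
            refine mul_le_mul_of_nonneg_left step1 (Finset.prod_nonneg fun i _ => ?_)
            exact mul_nonneg (Real.rpow_nonneg (hpos i).le _) (Real.exp_pos _).le
        _ = ∏ i : Fin n, g i (l i) := by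
            rw [← Finset.prod_mul_distrib]
            refine Finset.prod_congr rfl fun i _ => ?_
            simp only [hg]
            rw [Real.rpow_add (hpos i)]
            ring
    have hGnn : 0 ≤ G l := by
      rw [hGl]
      refine Finset.prod_nonneg fun i _ => ?_
      exact mul_nonneg (Real.rpow_nonneg (hpos i).le _) (Real.exp_pos _).le
    rw [Real.norm_eq_abs, Real.norm_eq_abs, abs_of_nonneg hFnn, abs_of_nonneg hGnn]
    exact key
  exact Integrable.mono hGint.integrableOn hFmeas.aestronglyMeasurable hbound
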